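/- Let N ≥ 2 and define V(s₁,…,s_{N−1}) = Σ_{k=1}^{N} (F(s_k) − F(s_{k−1}))·u(φ(s_{k−1}, s_k)), where s₀ = 0, s_N = 1 and the k-th summand is read as 0 whenever s_{k−1} = s_k. If (s₁,…,s_{N−1}) maximizes V over all vectors with 0 ≤ s₁ ≤ … ≤ s_{N−1} ≤ 1, then the maximizer satisfies 0 < s₁ < … < s_{N−1} < 1 and, setting x_k = φ(s_{k−1}, s_k) for k = 1,…,N, it satisfies s_k = μ(x_k, x_{k+1}) for every k = 1,…,N−1 (the dual expectations property). -/

import Mathlib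

open MeasureTheory Set

/-- The mean of the "density" `g` conditional on the interval `(a, b)`. -/
noncomputable def condMean (g : ℝ → ℝ) (a b : ℝ) : ℝ :=
  (∫ t in a..b, t * g t) / (∫ t in a..b, g t)

/-- The designer's expected payoff under the interval-partitional information
structure with cutoffs `s 1, …, s (N-1)` (where `s 0 = 0` and `s N = 1`):
each interval `(s (k-1), s k)` induces the posterior mean `condMean f (s (k-1)) (s k)`. -/
noncomputable def payoffV (f u : ℝ → ℝ) (N : ℕ) (s : ℕ → ℝ) : ℝ :=
  ∑ k ∈ Finset.Icc 1 N,
    ((∫ t in (0:ℝ)..(s k), f t) - (∫ t in (0:ℝ)..(s (k - 1)), f t)) *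
      u (condMean f (s (k - 1)) (s k))

lemma int_pos {g : ℝ → ℝ} (hg : Continuous g) (hgp : ∀ t ∈ Icc (0:ℝ) 1, 0 < g t)
    {a b : ℝ} (h0 : 0 ≤ a) (hab : a < b) (h1 : b ≤ 1) : 0 < ∫ t in a..b, g t := by
  apply intervalIntegral.intervalIntegral_pos_of_pos_on (hg.intervalIntegrable a b)
    (fun x hx => hgp x ⟨h0.trans hx.1.le, hx.2.le.trans h1⟩) hab

lemma condMean_mem {f : ℝ → ℝ} (hf : Continuous f) (hfp : ∀ t ∈ Icc (0:ℝ) 1, 0 < f t)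
    {a b : ℝ} (h0 : 0 ≤ a) (hab : a < b) (h1 : b ≤ 1) : condMean f a b ∈ Ioo a b := by
  have hA : 0 < ∫ t in a..b, f t := int_pos hf hfp h0 hab h1
  have hint : ∀ c : ℝ, IntervalIntegrable (fun t => (t - c) * f t) volume a b :=
    fun c => (Continuous.mul (by continuity) hf).intervalIntegrable a b
  have key : ∀ c : ℝ, (∫ t in a..b, (t - c) * f t)
      = (∫ t in a..b, t * f t) - c * ∫ t in a..b, f t := by
    intro c
    have h2 : IntervalIntegrable (fun t => c * f t) volume a b :=
      (continuous_const.mul hf).intervalIntegrable a b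
    have h3 : IntervalIntegrable (fun t => t * f t) volume a b :=
      (continuous_id.mul hf).intervalIntegrable a b
    calc (∫ t in a..b, (t - c) * f t) = ∫ t in a..b, (t * f t - c * f t) := by
          apply intervalIntegral.integral_congr; intro x _; ring
      _ = (∫ t in a..b, t * f t) - ∫ t in a..b, c * f t :=
          intervalIntegral.integral_sub h3 h2
      _ = (∫ t in a..b, t * f t) - c * ∫ t in a..b, f t := by
          rw [intervalIntegral.integral_const_mul]
  have key2 : (∫ t in a..b, (b - t) * f t)
      = b * (∫ t in a..b, f t) - ∫ t in a..b, t * f t := by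
    have : (∫ t in a..b, (b - t) * f t) = ∫ t in a..b, -((t - b) * f t) := by
      apply intervalIntegral.integral_congr; intro x _; ring
    rw [this, intervalIntegral.integral_neg, key b]; ring
  constructor
  · rw [condMean, lt_div_iff₀ hA, ← sub_pos, ← key]
    apply intervalIntegral.intervalIntegral_pos_of_pos_on (hint a) _ hab
    intro x hx
    exact mul_pos (sub_pos.mpr hx.1) (hfp x ⟨h0.trans hx.1.le, hx.2.le.trans h1⟩)
  · rw [condMean, div_lt_iff₀ hA, ← sub_pos, ← key2]
    apply intervalIntegral.intervalIntegral_pos_of_pos_on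
      ((Continuous.mul (by continuity) hf).intervalIntegrable a b) _ hab
    intro x hx
    exact mul_pos (sub_pos.mpr hx.2) (hfp x ⟨h0.trans hx.1.le, hx.2.le.trans h1⟩)

lemma u_sconv {u : ℝ → ℝ} (hu : ContDiff ℝ 2 u)
    (hu'' : ∀ t ∈ Icc (0:ℝ) 1, 0 < deriv (deriv u) t) :
    StrictConvexOn ℝ (Icc (0:ℝ) 1) u := by
  apply strictConvexOn_of_deriv2_pos (convex_Icc 0 1) hu.continuous.continuousOn
  intro x hx
  rw [interior_Icc] at hx
  have : deriv^[2] u = deriv (deriv u) := by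
    simp [Function.iterate_succ, Function.iterate_zero, Function.comp]
  rw [this]
  exact hu'' x (Ioo_subset_Icc_self hx)

noncomputable def FF (f : ℝ → ℝ) (x : ℝ) : ℝ := ∫ t in (0:ℝ)..x, f t
noncomputable def TT (f u : ℝ → ℝ) (a b : ℝ) : ℝ := (FF f b - FF f a) * u (condMean f a b)

lemma FF_sub {f : ℝ → ℝ} (hf : Continuous f) (a b : ℝ) :
    FF f b - FF f a = ∫ t in a..b, f t :=
  intervalIntegral.integral_interval_sub_left (hf.intervalIntegrable 0 b)
    (hf.intervalIntegrable 0 a)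

lemma TT_split {f u : ℝ → ℝ} (hf : Continuous f) (hfp : ∀ t ∈ Icc (0:ℝ) 1, 0 < f t)
    (hu : ContDiff ℝ 2 u) (hu'' : ∀ t ∈ Icc (0:ℝ) 1, 0 < deriv (deriv u) t)
    {a c b : ℝ} (h0 : 0 ≤ a) (hac : a < c) (hcb : c < b) (h1 : b ≤ 1) :
    TT f u a b < TT f u a c + TT f u c b := by
  have hc0 : 0 ≤ c := h0.trans hac.le
  have hc1 : c ≤ 1 := hcb.le.trans h1
  have hA1 : 0 < ∫ t in a..c, f t := int_pos hf hfp h0 hac hc1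
  have hA2 : 0 < ∫ t in c..b, f t := int_pos hf hfp hc0 hcb h1
  set A1 := ∫ t in a..c, f t
  set A2 := ∫ t in c..b, f t
  set x1 := condMean f a c with hx1def
  set x2 := condMean f c b with hx2def
  have hx1 : x1 ∈ Ioo a c := condMean_mem hf hfp h0 hac hc1
  have hx2 : x2 ∈ Ioo c b := condMean_mem hf hfp hc0 hcb h1
  have hx1m : x1 ∈ Icc (0:ℝ) 1 := ⟨h0.trans hx1.1.le, hx1.2.le.trans hc1⟩
  have hx2m : x2 ∈ Icc (0:ℝ) 1 := ⟨hc0.trans hx2.1.le, hx2.2.le.trans h1⟩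
  have hne : x1 ≠ x2 := ne_of_lt (hx1.2.trans hx2.1)
  have hAsum : (∫ t in a..b, f t) = A1 + A2 :=
    (intervalIntegral.integral_add_adjacent_intervals (hf.intervalIntegrable a c)
      (hf.intervalIntegrable c b)).symm
  have hMsum : (∫ t in a..b, t * f t) = (∫ t in a..c, t * f t) + ∫ t in c..b, t * f t :=
    (intervalIntegral.integral_add_adjacent_intervals
      ((continuous_id.mul hf).intervalIntegrable a c)
      ((continuous_id.mul hf).intervalIntegrable c b)).symm
  have hM1 : (∫ t in a..c, t * f t) = x1 * A1 := by
    rw [hx1def, condMean, div_mul_cancel₀ _ hA1.ne']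
  have hM2 : (∫ t in c..b, t * f t) = x2 * A2 := by
    rw [hx2def, condMean, div_mul_cancel₀ _ hA2.ne']
  have hApos : (0:ℝ) < A1 + A2 := by linarith
  have hcm : condMean f a b = (A1 / (A1 + A2)) * x1 + (A2 / (A1 + A2)) * x2 := by
    rw [condMean, hAsum, hMsum, hM1, hM2]; field_simp
  have hw1 : 0 < A1 / (A1 + A2) := div_pos hA1 hApos
  have hw2 : 0 < A2 / (A1 + A2) := div_pos hA2 hApos
  have hwsum : A1 / (A1 + A2) + A2 / (A1 + A2) = 1 := by field_simp
  have := (u_sconv hu hu'').2 hx1m hx2m hne hw1 hw2 hwsum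
  simp only [smul_eq_mul] at this
  rw [← hcm] at this
  have hTT : TT f u a b = (A1 + A2) * u (condMean f a b) := by
    rw [TT, FF_sub hf, hAsum]
  have hTT1 : TT f u a c = A1 * u x1 := by rw [TT, FF_sub hf]
  have hTT2 : TT f u c b = A2 * u x2 := by rw [TT, FF_sub hf]
  rw [hTT, hTT1, hTT2]
  calc (A1 + A2) * u (condMean f a b)
      < (A1 + A2) * (A1 / (A1 + A2) * u x1 + A2 / (A1 + A2) * u x2) := by
        exact (mul_lt_mul_iff_right₀ hApos).mpr this
    _ = A1 * u x1 + A2 * u x2 := by field_simp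


lemma payoffV_eq (f u : ℝ → ℝ) (N : ℕ) (s : ℕ → ℝ) :
    payoffV f u N s = ∑ k ∈ Finset.Icc 1 N, TT f u (s (k - 1)) (s k) := rfl

lemma payoff_update (f u : ℝ → ℝ) {N : ℕ} (s : ℕ → ℝ) {m : ℕ} (h1m : 1 ≤ m)
    (hmN : m < N) (c : ℝ) :
    payoffV f u N (Function.update s m c) - payoffV f u N s =
      (TT f u (s (m-1)) c + TT f u c (s (m+1)))
        - (TT f u (s (m-1)) (s m) + TT f u (s m) (s (m+1))) := by
  classical
  set t := Function.update s m c with ht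
  have htm : t m = c := Function.update_self m c s
  have hto : ∀ i, i ≠ m → t i = s i := fun i hi => Function.update_of_ne hi c s
  rw [payoffV_eq, payoffV_eq, ← Finset.sum_sub_distrib]
  have hsub : ({m, m+1} : Finset ℕ) ⊆ Finset.Icc 1 N := by
    intro x hx; simp at hx; rcases hx with h | h <;> simp [Finset.mem_Icc] <;> omega
  have hzero : ∀ x ∈ Finset.Icc 1 N, x ∉ ({m, m+1} : Finset ℕ) →
      TT f u (t (x-1)) (t x) - TT f u (s (x-1)) (s x) = 0 := by
    intro x hx hxn
    simp [Finset.mem_Icc] at hx hxn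
    rw [hto x (by omega), hto (x-1) (by omega), sub_self]
  rw [← Finset.sum_subset hsub hzero, Finset.sum_pair (by omega : m ≠ m+1)]
  rw [htm, hto (m-1) (by omega), hto (m+1) (by omega),
    show m + 1 - 1 = m from rfl, htm]
  ring

lemma mono_chain {s : ℕ → ℝ} {n : ℕ} (h : ∀ i < n, s i ≤ s (i+1)) :
    ∀ {i j}, i ≤ j → j ≤ n → s i ≤ s j := by
  intro i j hij hjn
  induction j with
  | zero => exact le_of_eq (by rw [Nat.le_zero.mp hij])
  | succ j ih =>
    rcases Nat.lt_succ_iff_lt_or_eq.mp (Nat.lt_succ_of_le hij) with h' | h'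
    · exact (ih (by omega) (by omega)).trans (h j (by omega))
    · exact le_of_eq (by rw [h'])

lemma exists_last_inc (s : ℕ → ℝ) :
    ∀ k, (∀ i < k, s i ≤ s (i+1)) → s 0 < s k →
      ∃ j, j < k ∧ s j < s (j+1) ∧ s (j+1) = s k := by
  intro k
  induction k with
  | zero => intro _ h; exact absurd h (lt_irrefl _)
  | succ k ih =>
    intro hm h
    by_cases hk : s k < s (k+1)
    · exact ⟨k, Nat.lt_succ_self k, hk, rfl⟩
    · have heq : s k = s (k+1) := le_antisymm (hm k (Nat.lt_succ_self k)) (not_lt.mp hk)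
      obtain ⟨j, hj1, hj2, hj3⟩ := ih (fun i hi => hm i (by omega)) (heq ▸ h)
      exact ⟨j, by omega, hj2, hj3.trans heq⟩

lemma exists_first_inc (s : ℕ → ℝ) :
    ∀ q, (∀ i < q, s i ≤ s (i+1)) → ∀ k, k < q → s k < s q →
      ∃ j, k ≤ j ∧ j < q ∧ s j < s (j+1) ∧ s j = s k := by
  intro q
  induction q with
  | zero => intro _ k hk; omega
  | succ q ih =>
    intro hm k hk h
    by_cases hkq : k = q
    · subst hkq; exact ⟨k, le_refl k, Nat.lt_succ_self k, h, rfl⟩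
    · have hkq' : k < q := by omega
      by_cases h2 : s k < s q
      · obtain ⟨j, hj1, hj2, hj3, hj4⟩ := ih (fun i hi => hm i (by omega)) k hkq' h2
        exact ⟨j, hj1, by omega, hj3, hj4⟩
      · have hle : s k ≤ s q := mono_chain (n := q) (fun i hi => hm i (by omega)) hkq'.le le_rfl
        have heq : s q = s k := le_antisymm (not_lt.mp h2) hle
        exact ⟨q, hkq'.le, Nat.lt_succ_self q, heq ▸ h, heq⟩

lemma TT_self (f u : ℝ → ℝ) (a : ℝ) : TT f u a a = 0 := by simp [TT]

lemma part1 (f u : ℝ → ℝ) (N : ℕ) (hN : 2 ≤ N)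
    (hf_cont : Continuous f) (hf_pos : ∀ t ∈ Icc (0:ℝ) 1, 0 < f t)
    (hu : ContDiff ℝ 2 u)
    (hu'' : ∀ t ∈ Icc (0:ℝ) 1, 0 < deriv (deriv u) t)
    (s : ℕ → ℝ) (hs0 : s 0 = 0) (hsN : s N = 1)
    (hmono : ∀ k < N, s k ≤ s (k + 1))
    (hmax : ∀ t : ℕ → ℝ, t 0 = 0 → t N = 1 → (∀ k < N, t k ≤ t (k + 1)) →
      payoffV f u N t ≤ payoffV f u N s) :
    ∀ k < N, s k < s (k + 1) := by
  by_contra hcon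
  push_neg at hcon
  obtain ⟨k, hkN, hks⟩ := hcon
  have hkeq : s k = s (k+1) := le_antisymm (hmono k hkN) hks
  have sb : ∀ i, i ≤ N → 0 ≤ s i ∧ s i ≤ 1 := by
    intro i hi
    constructor
    · rw [← hs0]; exact mono_chain hmono (Nat.zero_le i) hi
    · rw [← hsN]; exact mono_chain hmono hi le_rfl
  -- find the pivot index m
  have hm : ∃ m, 1 ≤ m ∧ m < N ∧ s (m-1) < s (m+1) ∧
      (s m = s (m-1) ∨ s m = s (m+1)) := by
    by_cases hk0 : s 0 < s k
    · obtain ⟨j, hj1, hj2, hj3⟩ := exists_last_inc s k (fun i hi => hmono i (by omega)) hk0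
      refine ⟨j+1, by omega, by omega, ?_, Or.inr ?_⟩
      · simp only [Nat.add_sub_cancel]
        calc s j < s (j+1) := hj2
          _ ≤ s (j+1+1) := hmono (j+1) (by omega)
      · have h1 : s (j+1) ≤ s (j+2) := hmono (j+1) (by omega)
        have h2 : s (j+2) ≤ s (k+1) := mono_chain hmono (by omega) (by omega)
        have : s (j+2) ≤ s (j+1) := by rw [hj3, hkeq] at *; linarith
        exact le_antisymm h1 this
    · have hk00 : s k = 0 := by
        have := (sb k (by omega)).1
        rw [hs0] at hk0; push_neg at hk0; linarith
      have hkN' : k + 1 < N := by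
        by_contra hc
        have : k + 1 = N := by omega
        rw [← this] at hsN
        rw [← hkeq, hk00] at hsN; norm_num at hsN
      have hlt : s (k+1) < s N := by rw [← hkeq, hk00, hsN]; norm_num
      obtain ⟨j, hj1, hj2, hj3, hj4⟩ := exists_first_inc s N hmono (k+1) hkN' hlt
      refine ⟨j, by omega, hj2, ?_, Or.inl ?_⟩
      · have : s (j-1) = s j := by
          have ha : s k ≤ s (j-1) := mono_chain hmono (by omega) (by omega)
          have hb : s (j-1) ≤ s j := mono_chain hmono (by omega) (by omega)
          rw [hj4, ← hkeq, hk00] at *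
          linarith
        rw [this]; exact hj3
      · have ha : s k ≤ s (j-1) := mono_chain hmono (by omega) (by omega)
        have hb : s (j-1) ≤ s j := mono_chain hmono (by omega) (by omega)
        rw [hj4, ← hkeq, hk00] at *
        linarith
  obtain ⟨m, h1m, hmN, hab, hor⟩ := hm
  set a := s (m-1) with hadef
  set b := s (m+1) with hbdef
  set c := (a + b)/2 with hcdef
  have hac : a < c := by rw [hcdef]; linarith
  have hcb : c < b := by rw [hcdef]; linarith
  have h0a : 0 ≤ a := (sb (m-1) (by omega)).1
  have hb1 : b ≤ 1 := (sb (m+1) (by omega)).2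
  set t := Function.update s m c with htdef
  have ht0 : t 0 = 0 := by rw [htdef, Function.update_of_ne (by omega : (0:ℕ) ≠ m)]; exact hs0
  have htN : t N = 1 := by rw [htdef, Function.update_of_ne (by omega : N ≠ m)]; exact hsN
  have htmono : ∀ i < N, t i ≤ t (i+1) := by
    intro i hiN
    by_cases him : i = m
    · subst him
      rw [htdef, Function.update_self, Function.update_of_ne (by omega : i+1 ≠ i)]
      exact hcb.le
    · by_cases him' : i + 1 = m
      · rw [htdef, Function.update_of_ne (by omega : i ≠ m), him', Function.update_self]
        have : i = m - 1 := by omega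
        rw [this, ← hadef]
        exact hac.le
      · rw [htdef, Function.update_of_ne (by omega : i ≠ m),
          Function.update_of_ne (by omega : i+1 ≠ m)]
        exact hmono i hiN
  have hle := hmax t ht0 htN htmono
  have hdiff := payoff_update f u s h1m hmN c
  rw [← htdef] at hdiff
  have hsum : TT f u a (s m) + TT f u (s m) b = TT f u a b := by
    rcases hor with h | h
    · rw [h, TT_self]; ring
    · rw [h, TT_self]; ring
  have hsplit := TT_split hf_cont hf_pos hu hu'' h0a hac hcb hb1
  rw [hsum] at hdiff
  linarith

lemma hasDerivAt_TT_right {f u : ℝ → ℝ} (hf : Continuous f)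
    (hfp : ∀ t ∈ Icc (0:ℝ) 1, 0 < f t) (hu : ContDiff ℝ 2 u)
    {a x0 : ℝ} (h0 : 0 ≤ a) (hax : a < x0) (hx1 : x0 ≤ 1) :
    HasDerivAt (fun x => TT f u a x)
      (f x0 * (u (condMean f a x0)
        + deriv u (condMean f a x0) * (x0 - condMean f a x0))) x0 := by
  have htf : Continuous (fun t : ℝ => t * f t) := continuous_id.mul hf
  have hA : HasDerivAt (fun x => ∫ t in a..x, f t) (f x0) x0 :=
    intervalIntegral.integral_hasDerivAt_right (hf.intervalIntegrable a x0)
      (hf.stronglyMeasurableAtFilter volume _) hf.continuousAt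
  have hM : HasDerivAt (fun x => ∫ t in a..x, t * f t) (x0 * f x0) x0 :=
    intervalIntegral.integral_hasDerivAt_right (htf.intervalIntegrable a x0)
      (htf.stronglyMeasurableAtFilter volume _) htf.continuousAt
  have hApos : 0 < ∫ t in a..x0, f t := int_pos hf hfp h0 hax hx1
  have hdiv : HasDerivAt (fun x => (∫ t in a..x, t * f t) / ∫ t in a..x, f t)
      ((x0 * f x0 * (∫ t in a..x0, f t) - (∫ t in a..x0, t * f t) * f x0)
        / (∫ t in a..x0, f t)^2) x0 := hM.div hA hApos.ne'
  have hFF : HasDerivAt (fun x => FF f x - FF f a) (f x0) x0 := by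
    apply HasDerivAt.sub_const
    exact intervalIntegral.integral_hasDerivAt_right (hf.intervalIntegrable 0 x0)
      (hf.stronglyMeasurableAtFilter volume _) hf.continuousAt
  have hucomp : HasDerivAt (fun x => u ((∫ t in a..x, t * f t) / ∫ t in a..x, f t))
      (deriv u ((∫ t in a..x0, t * f t) / ∫ t in a..x0, f t) *
        ((x0 * f x0 * (∫ t in a..x0, f t) - (∫ t in a..x0, t * f t) * f x0)
          / (∫ t in a..x0, f t)^2)) x0 :=
    ((hu.differentiable (by norm_num)).differentiableAt.hasDerivAt).comp x0 hdiv
  have hmul := hFF.mul hucomp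
  have heq : (fun x => (FF f x - FF f a) *
      u ((∫ t in a..x, t * f t) / ∫ t in a..x, f t)) = fun x => TT f u a x := rfl
  have hmul : HasDerivAt (fun x => TT f u a x) _ x0 := hmul
  convert hmul using 1
  have hFa : FF f x0 - FF f a = ∫ t in a..x0, f t := FF_sub hf a x0
  rw [hFa]
  show f x0 * (u (condMean f a x0) + deriv u (condMean f a x0) * (x0 - condMean f a x0)) = _
  rw [show condMean f a x0 = (∫ t in a..x0, t * f t) / ∫ t in a..x0, f t from rfl]
  field_simp

lemma hasDerivAt_TT_left {f u : ℝ → ℝ} (hf : Continuous f)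
    (hfp : ∀ t ∈ Icc (0:ℝ) 1, 0 < f t) (hu : ContDiff ℝ 2 u)
    {b x0 : ℝ} (h0 : 0 ≤ x0) (hxb : x0 < b) (hb1 : b ≤ 1) :
    HasDerivAt (fun x => TT f u x b)
      (-(f x0 * (u (condMean f x0 b)
        + deriv u (condMean f x0 b) * (x0 - condMean f x0 b)))) x0 := by
  have htf : Continuous (fun t : ℝ => t * f t) := continuous_id.mul hf
  have hA : HasDerivAt (fun x => ∫ t in x..b, f t) (-f x0) x0 :=
    intervalIntegral.integral_hasDerivAt_left (hf.intervalIntegrable x0 b)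
      (hf.stronglyMeasurableAtFilter volume _) hf.continuousAt
  have hM : HasDerivAt (fun x => ∫ t in x..b, t * f t) (-(x0 * f x0)) x0 :=
    intervalIntegral.integral_hasDerivAt_left (htf.intervalIntegrable x0 b)
      (htf.stronglyMeasurableAtFilter volume _) htf.continuousAt
  have hApos : 0 < ∫ t in x0..b, f t := int_pos hf hfp h0 hxb hb1
  have hdiv : HasDerivAt (fun x => (∫ t in x..b, t * f t) / ∫ t in x..b, f t)
      ((-(x0 * f x0) * (∫ t in x0..b, f t) - (∫ t in x0..b, t * f t) * (-f x0))
        / (∫ t in x0..b, f t)^2) x0 := hM.div hA hApos.ne'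
  have hFF : HasDerivAt (fun x => FF f b - FF f x) (-f x0) x0 := by
    apply HasDerivAt.const_sub
    exact intervalIntegral.integral_hasDerivAt_right (hf.intervalIntegrable 0 x0)
      (hf.stronglyMeasurableAtFilter volume _) hf.continuousAt
  have hucomp : HasDerivAt (fun x => u ((∫ t in x..b, t * f t) / ∫ t in x..b, f t))
      (deriv u ((∫ t in x0..b, t * f t) / ∫ t in x0..b, f t) *
        ((-(x0 * f x0) * (∫ t in x0..b, f t) - (∫ t in x0..b, t * f t) * (-f x0))
          / (∫ t in x0..b, f t)^2)) x0 :=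
    ((hu.differentiable (by norm_num)).differentiableAt.hasDerivAt).comp x0 hdiv
  have hmul := hFF.mul hucomp
  have heq : (fun x => (FF f b - FF f x) *
      u ((∫ t in x..b, t * f t) / ∫ t in x..b, f t)) = fun x => TT f u x b := rfl
  have hmul : HasDerivAt (fun x => TT f u x b) _ x0 := hmul
  convert hmul using 1
  have hFa : FF f b - FF f x0 = ∫ t in x0..b, f t := FF_sub hf x0 b
  rw [hFa]
  show -(f x0 * (u (condMean f x0 b) + deriv u (condMean f x0 b) * (x0 - condMean f x0 b))) = _
  rw [show condMean f x0 b = (∫ t in x0..b, t * f t) / ∫ t in x0..b, f t from rfl]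
  field_simp
  ring

lemma part2 (f u : ℝ → ℝ) (N : ℕ) (hN : 2 ≤ N)
    (hf_cont : Continuous f) (hf_pos : ∀ t ∈ Icc (0:ℝ) 1, 0 < f t)
    (hu : ContDiff ℝ 2 u)
    (hu'' : ∀ t ∈ Icc (0:ℝ) 1, 0 < deriv (deriv u) t)
    (s : ℕ → ℝ) (hs0 : s 0 = 0) (hsN : s N = 1)
    (hmono : ∀ k < N, s k ≤ s (k + 1))
    (hmax : ∀ t : ℕ → ℝ, t 0 = 0 → t N = 1 → (∀ k < N, t k ≤ t (k + 1)) →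
      payoffV f u N t ≤ payoffV f u N s)
    (hstrict : ∀ k < N, s k < s (k + 1)) :
    ∀ k, 1 ≤ k → k ≤ N - 1 →
      s k = condMean (deriv (deriv u))
        (condMean f (s (k - 1)) (s k)) (condMean f (s k) (s (k + 1))) := by
  intro k h1k hkN1
  have hkN : k < N := by omega
  have sb : ∀ i, i ≤ N → 0 ≤ s i ∧ s i ≤ 1 := by
    intro i hi
    constructor
    · rw [← hs0]; exact mono_chain hmono (Nat.zero_le i) hi
    · rw [← hsN]; exact mono_chain hmono hi le_rfl
  set a := s (k-1) with hadef
  set x0 := s k with hx0def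
  set b := s (k+1) with hbdef
  have hax : a < x0 := by
    have := hstrict (k-1) (by omega)
    rwa [show k - 1 + 1 = k from by omega] at this
  have hxb : x0 < b := hstrict k hkN
  have h0a : 0 ≤ a := (sb (k-1) (by omega)).1
  have hx01 : x0 ≤ 1 := (sb k (by omega)).2
  have h0x : 0 ≤ x0 := (sb k (by omega)).1
  have hb1 : b ≤ 1 := (sb (k+1) (by omega)).2
  set x₁ := condMean f a x0 with hx1def
  set x₂ := condMean f x0 b with hx2def
  have hx1mem : x₁ ∈ Ioo a x0 := condMean_mem hf_cont hf_pos h0a hax hx01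
  have hx2mem : x₂ ∈ Ioo x0 b := condMean_mem hf_cont hf_pos h0x hxb hb1
  have hx12 : x₁ < x₂ := hx1mem.2.trans hx2mem.1
  have hx10 : 0 ≤ x₁ := h0a.trans hx1mem.1.le
  have hx21 : x₂ ≤ 1 := hx2mem.2.le.trans hb1
  -- local maximality in the k-th coordinate
  set g : ℝ → ℝ := fun x => TT f u a x + TT f u x b with hgdef
  have claim : ∀ x ∈ Icc a b, g x ≤ g x0 := by
    intro x hx
    set t := Function.update s k x with htdef
    have ht0 : t 0 = 0 := by
      rw [htdef, Function.update_of_ne (by omega : (0:ℕ) ≠ k)]; exact hs0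
    have htN : t N = 1 := by
      rw [htdef, Function.update_of_ne (by omega : N ≠ k)]; exact hsN
    have htmono : ∀ i < N, t i ≤ t (i+1) := by
      intro i hiN
      by_cases him : i = k
      · subst him
        rw [htdef, Function.update_self, Function.update_of_ne (by omega : i+1 ≠ i)]
        exact hx.2
      · by_cases him' : i + 1 = k
        · rw [htdef, Function.update_of_ne (by omega : i ≠ k), him', Function.update_self]
          have : i = k - 1 := by omega
          rw [this, ← hadef]
          exact hx.1
        · rw [htdef, Function.update_of_ne (by omega : i ≠ k),
            Function.update_of_ne (by omega : i+1 ≠ k)]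
          exact hmono i hiN
    have hle := hmax t ht0 htN htmono
    have hdiff := payoff_update f u s h1k hkN x
    rw [← htdef] at hdiff
    have : g x - g x0 = payoffV f u N t - payoffV f u N s := by
      rw [hdiff, hgdef]
    linarith [this ▸ sub_nonpos.mpr hle]
  have hloc : IsLocalMax g x0 :=
    Filter.eventually_of_mem (Icc_mem_nhds hax hxb) claim
  have hg : HasDerivAt g
      ((f x0 * (u x₁ + deriv u x₁ * (x0 - x₁)))
        + -(f x0 * (u x₂ + deriv u x₂ * (x0 - x₂)))) x0 :=
    (hasDerivAt_TT_right hf_cont hf_pos hu h0a hax hx01).add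
      (hasDerivAt_TT_left hf_cont hf_pos hu h0x hxb hb1)
  have hzero := hloc.hasDerivAt_eq_zero hg
  have hf0 : 0 < f x0 := hf_pos x0 ⟨h0x, hx01⟩
  have hstar : u x₁ + deriv u x₁ * (x0 - x₁) = u x₂ + deriv u x₂ * (x0 - x₂) := by
    have h := hzero
    have : f x0 * ((u x₁ + deriv u x₁ * (x0 - x₁)) - (u x₂ + deriv u x₂ * (x0 - x₂))) = 0 := by
      linarith [h]
    have := mul_eq_zero.mp this
    rcases this with h' | h'
    · exact absurd h' hf0.ne'
    · linarith
  -- compute the conditional mean of u''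
  have hdu : ContDiff ℝ 1 (deriv u) := by
    have h2 : ContDiff ℝ ((1:ℕ) + 1) u := by exact_mod_cast hu
    exact (contDiff_succ_iff_deriv.mp (by exact_mod_cast h2)).2.2
  have hd2cont : Continuous (deriv (deriv u)) := hdu.continuous_deriv le_rfl
  have hduD : ∀ x : ℝ, HasDerivAt (deriv u) (deriv (deriv u) x) x :=
    fun x => ((hdu.differentiable one_ne_zero) x).hasDerivAt
  have hden : (∫ t in x₁..x₂, deriv (deriv u) t) = deriv u x₂ - deriv u x₁ :=
    intervalIntegral.integral_deriv_eq_sub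
      (fun x _ => (hdu.differentiable one_ne_zero) x)
      (hd2cont.intervalIntegrable _ _)
  have hnum : (∫ t in x₁..x₂, t * deriv (deriv u) t)
      = x₂ * deriv u x₂ - x₁ * deriv u x₁ - (u x₂ - u x₁) := by
    have hparts := intervalIntegral.integral_mul_deriv_eq_deriv_mul
      (u := fun x : ℝ => x) (u' := fun _ : ℝ => (1:ℝ)) (v := deriv u)
      (v' := deriv (deriv u))
      (fun x _ => hasDerivAt_id x) (fun x _ => hduD x)
      (continuous_const.intervalIntegrable _ _)
      (hd2cont.intervalIntegrable _ _) (a := x₁) (b := x₂)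
    have hmid : (∫ t in x₁..x₂, (1:ℝ) * deriv u t) = u x₂ - u x₁ := by
      rw [show (fun t : ℝ => (1:ℝ) * deriv u t) = deriv u from funext fun t => one_mul _]
      exact intervalIntegral.integral_deriv_eq_sub
        (fun x _ => (hu.differentiable (by norm_num)) x)
        ((hdu.continuous).intervalIntegrable _ _)
    rw [hparts, hmid]
  have hdenpos : 0 < ∫ t in x₁..x₂, deriv (deriv u) t :=
    int_pos hd2cont hu'' hx10 hx12 hx21
  rw [condMean, hnum, hden]
  rw [eq_div_iff (by rw [hden] at hdenpos; exact hdenpos.ne')]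
  linear_combination (-1 : ℝ) * hstar

/-- dual expectations property of a maximizer. -/
theorem stmt_0 (f u : ℝ → ℝ) (N : ℕ) (hN : 2 ≤ N)
    (hf_cont : Continuous f) (hf_pos : ∀ t ∈ Icc (0:ℝ) 1, 0 < f t)
    (hf_prob : (∫ t in (0:ℝ)..1, f t) = 1)
    (hu : ContDiff ℝ 2 u)
    (hu'' : ∀ t ∈ Icc (0:ℝ) 1, 0 < deriv (deriv u) t)
    (s : ℕ → ℝ) (hs0 : s 0 = 0) (hsN : s N = 1)
    (hmono : ∀ k < N, s k ≤ s (k + 1))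
    (hmax : ∀ t : ℕ → ℝ, t 0 = 0 → t N = 1 → (∀ k < N, t k ≤ t (k + 1)) →
      payoffV f u N t ≤ payoffV f u N s) :
    (∀ k < N, s k < s (k + 1)) ∧
    (∀ k, 1 ≤ k → k ≤ N - 1 →
      s k = condMean (deriv (deriv u))
        (condMean f (s (k - 1)) (s k)) (condMean f (s k) (s (k + 1)))) := by
  have h1 := part1 f u N hN hf_cont hf_pos hu hu'' s hs0 hsN hmono hmax
  exact ⟨h1, part2 f u N hN hf_cont hf_pos hu hu'' s hs0 hsN hmono hmax h1⟩
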